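/- Let S_1, S_2 ⊆ {1, ..., n} with S_1 ≠ S_2. Then for any integers t_1, t_2 with max S_1 ≤ t_1 ≤ n and max S_2 ≤ t_2 ≤ n, the sets x^{t_1}_{S_1,n} and x^{t_2}_{S_2,n} are disjoint; consequently the unions x_{S_1,n} = ∪_{t} x^t_{S_1,n} and x_{S_2,n} = ∪_{t} x^t_{S_2,n} are disjoint. -/

import Mathlib

/-- Vertices of the spider `S(2ⁿ)`: a center `v₀` together with legs `vᵢ` and
leg-tips `v'ᵢ` for `1 ≤ i ≤ n`. -/
inductive SpiderV (n : ℕ) : Type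
  | center : SpiderV n
  | leg : Fin n → SpiderV n
  | tip : Fin n → SpiderV n
  deriving DecidableEq, Fintype

/-- The set of indices `i` with `α(vᵢ) = 1` and `α(v'ᵢ) = 0`. -/
def suppA (n : ℕ) (α : SpiderV n → ℕ) : Finset (Fin n) :=
  Finset.univ.filter fun i => α (.leg i) = 1 ∧ α (.tip i) = 0

/-- `α ∈ 𝒜_k`: maps `α : V(S(2ⁿ)) → ℕ` with `α(v₀) = 1`, `α(vᵢ) ≤ 1` and
`α(vᵢ) + α(v'ᵢ) ≤ 2` for all `i`, and `#{i : α(vᵢ) = 1, α(v'ᵢ) = 0} = k`. -/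
def memA (n k : ℕ) (α : SpiderV n → ℕ) : Prop :=
  α .center = 1 ∧ (∀ i : Fin n, α (.leg i) ≤ 1 ∧ α (.leg i) + α (.tip i) ≤ 2) ∧
    (suppA n α).card = k

/-- The map `φ_S`: writing `{i : α(vᵢ) = 1, α(v'ᵢ) = 0} = {i₁ < i₂ < ⋯ < i_k}`,
`φ_S(α)` sends `v_{i_j} ↦ 2` for `j ∈ S` (positions are 1-indexed), `v₀ ↦ 0`, and
agrees with `α` on all other vertices. -/
def phi (n : ℕ) (S : Finset ℕ) (α : SpiderV n → ℕ) : SpiderV n → ℕ :=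
  fun v =>
    match v with
    | .center => 0
    | .leg i =>
        if i ∈ suppA n α ∧ ((suppA n α).sort (· ≤ ·)).idxOf i + 1 ∈ S then 2
        else α (.leg i)
    | .tip i => α (.tip i)

/-- The set of indices `i` with `α(vᵢ) ≥ 1` and `α(v'ᵢ) = 0`. -/
def suppX (n : ℕ) (α : SpiderV n → ℕ) : Finset (Fin n) :=
  Finset.univ.filter fun i => 1 ≤ α (.leg i) ∧ α (.tip i) = 0

/-- `α ∈ x^t_{S,n}`: maps `α : V(S(2ⁿ)) → ℕ` with `α(v₀) = 0`,
`α(vᵢ) + α(v'ᵢ) ≤ 2` for all `i`, such that `T = {i : α(vᵢ) ≥ 1, α(v'ᵢ) = 0}` has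
exactly `t` elements, and writing `T = {k₁ < ⋯ < k_t}` one has `α(v_{k_j}) = 2` if
`j ∈ S` and `α(v_{k_j}) = 1` otherwise (positions `j` are 1-indexed). -/
def memX (n : ℕ) (S : Finset ℕ) (t : ℕ) (α : SpiderV n → ℕ) : Prop :=
  α .center = 0 ∧ (∀ i : Fin n, α (.leg i) + α (.tip i) ≤ 2) ∧
    (suppX n α).card = t ∧
    ∀ i ∈ suppX n α,
      α (.leg i) = if ((suppX n α).sort (· ≤ ·)).idxOf i + 1 ∈ S then 2 else 1

/-- For `S₁ ≠ S₂` with `S₁, S₂ ⊆ {1, …, n}`, and any `t₁, t₂` with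
`max S₁ ≤ t₁ ≤ n` and `max S₂ ≤ t₂ ≤ n`, the sets `x^{t₁}_{S₁,n}` and
`x^{t₂}_{S₂,n}` are disjoint; consequently so are the unions `x_{S₁,n}` and
`x_{S₂,n}`. -/
theorem memX_disjoint (n : ℕ) (S₁ S₂ : Finset ℕ)
    (hS₁ : S₁ ⊆ Finset.Icc 1 n) (hS₂ : S₂ ⊆ Finset.Icc 1 n) (hne : S₁ ≠ S₂)
    (t₁ t₂ : ℕ) (ht₁ : ∀ s ∈ S₁, s ≤ t₁) (ht₁n : t₁ ≤ n)
    (ht₂ : ∀ s ∈ S₂, s ≤ t₂) (ht₂n : t₂ ≤ n) (α : SpiderV n → ℕ) :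
    ¬ (memX n S₁ t₁ α ∧ memX n S₂ t₂ α) := by
  rintro ⟨⟨-, -, hc1, hv1⟩, -, -, hc2, hv2⟩
  have key : ∀ (A B : Finset ℕ) (t : ℕ), A ⊆ Finset.Icc 1 n → (∀ s ∈ A, s ≤ t) →
      (suppX n α).card = t →
      (∀ i ∈ suppX n α,
        α (.leg i) = if ((suppX n α).sort (· ≤ ·)).idxOf i + 1 ∈ A then 2 else 1) →
      (∀ i ∈ suppX n α,
        α (.leg i) = if ((suppX n α).sort (· ≤ ·)).idxOf i + 1 ∈ B then 2 else 1) →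
      ∀ s ∈ A, s ∉ B → False := by
    intro A B t hsub hle hc hvA hvB s hsA hsB
    have h1le : 1 ≤ s := (Finset.mem_Icc.mp (hsub hsA)).1
    have hst : s ≤ t := hle s hsA
    set l := (suppX n α).sort (· ≤ ·) with hl
    have hlen : l.length = t := by rw [hl, Finset.length_sort, hc]
    have hidx : s - 1 < l.length := by omega
    set i := l.get ⟨s - 1, hidx⟩ with hi
    have hmem : i ∈ suppX n α := by
      rw [← Finset.mem_sort (· ≤ ·)]; exact List.get_mem l _
    have hindex : l.idxOf i = s - 1 := by
      rw [hi, List.get_idxOf (Finset.sort_nodup _ _)]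
    have hidx1 : l.idxOf i + 1 = s := by omega
    have e1 := hvA i hmem
    have e2 := hvB i hmem
    rw [hidx1, if_pos hsA] at e1
    rw [hidx1, if_neg hsB] at e2
    omega
  by_cases h : S₁ ⊆ S₂
  · obtain ⟨s, hs, hs'⟩ := Finset.not_subset.mp (fun h2 => hne (le_antisymm h h2))
    exact key S₂ S₁ t₂ hS₂ ht₂ hc2 hv2 hv1 s hs hs'
  · obtain ⟨s, hs, hs'⟩ := Finset.not_subset.mp h
    exact key S₁ S₂ t₁ hS₁ ht₁ hc1 hv1 hv2 s hs hs'
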